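/- Let U₀ > 0, a ≠ 0, c ∈ ℝ, κ > 0 and set U(φ) = U₀·exp(−(a/2)φ² + cφ), λ(φ) = −(√6/κ)·U′(φ)/U(φ), α = 6a/κ². Then: (i) for every φ with aφ ≠ c, Γ(φ) := U″(φ)U(φ)/U′(φ)² = 1 − α/λ(φ)²; (ii) for every φ ∈ ℝ, κφ/√6 = λ(φ)/α + κc/(√6·a). -/

import Mathlib

/-- For the Gaussian-type potential `U(φ) = U₀·exp(−(a/2)φ² + cφ)`,
with `λ(φ) = −(√6/κ)·U′(φ)/U(φ)` and `α = 6a/κ²`: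
(i) wherever `aφ ≠ c` one has `Γ(φ) = U″U/U′² = 1 − α/λ(φ)²`;
(ii) `κφ/√6 = λ(φ)/α + κc/(√6·a)` for all `φ`. -/
theorem gaussian_potential_Gamma_and_z (U₀ a c κ : ℝ)
    (hU₀ : 0 < U₀) (ha : a ≠ 0) (hκ : 0 < κ) :
    let U : ℝ → ℝ := fun φ => U₀ * Real.exp (-(a/2)*φ^2 + c*φ)
    let lam : ℝ → ℝ := fun φ => -(Real.sqrt 6 / κ) * deriv U φ / U φ
    let α : ℝ := 6*a/κ^2
    (∀ φ : ℝ, a*φ ≠ c →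
      deriv (deriv U) φ * U φ / (deriv U φ)^2 = 1 - α/(lam φ)^2) ∧
    (∀ φ : ℝ, κ*φ/Real.sqrt 6 = lam φ/α + κ*c/(Real.sqrt 6 * a)) := by
  intro U lam α
  have hUpos : ∀ φ : ℝ, 0 < U φ := fun φ => by
    exact mul_pos hU₀ (Real.exp_pos _)
  have hd : ∀ φ : ℝ, HasDerivAt U ((c - a*φ) * U φ) φ := by
    intro φ
    have h1 : HasDerivAt (fun φ : ℝ => -(a/2)*φ^2 + c*φ) (-(a/2)*(2*φ) + c) φ := by
      have := ((hasDerivAt_pow 2 φ).const_mul (-(a/2))).add ((hasDerivAt_id φ).const_mul c)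
      simpa [mul_comm, Pi.add_def] using this
    have := (h1.exp).const_mul U₀
    convert this using 1
    show (c - a*φ) * (U₀ * Real.exp (-(a/2)*φ^2 + c*φ)) = _
    ring
    all_goals rfl
  have hderivU : deriv U = fun φ => (c - a*φ) * U φ := funext fun φ => (hd φ).deriv
  have hd2 : ∀ φ : ℝ, deriv (deriv U) φ = -a * U φ + (c - a*φ) * ((c - a*φ) * U φ) := by
    intro φ
    rw [hderivU]
    have : HasDerivAt (fun φ : ℝ => (c - a*φ) * U φ)
        ((0 - a*1) * U φ + (c - a*φ) * ((c - a*φ) * U φ)) φ := by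
      exact ((hasDerivAt_const φ c).sub ((hasDerivAt_id φ).const_mul a)).mul (hd φ)
    simpa using this.deriv
  have hlam : ∀ φ : ℝ, lam φ = -(Real.sqrt 6 / κ) * (c - a*φ) := by
    intro φ
    show -(Real.sqrt 6 / κ) * deriv U φ / U φ = _
    rw [hderivU]
    field_simp [(hUpos φ).ne']
  have h6 : Real.sqrt 6 * Real.sqrt 6 = 6 := Real.mul_self_sqrt (by norm_num)
  have h6ne : Real.sqrt 6 ≠ 0 := by positivity
  constructor
  · intro φ hφ
    have hca : c - a*φ ≠ 0 := fun h => hφ (by linarith [sub_eq_zero.mp h])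
    rw [hd2, hderivU, hlam]
    show (-a * U φ + (c - a*φ) * ((c - a*φ) * U φ)) * U φ / ((c - a*φ) * U φ)^2
      = 1 - (6*a/κ^2) / (-(Real.sqrt 6 / κ) * (c - a*φ))^2
    field_simp [(hUpos φ).ne', hκ.ne']
    ring_nf
    rw [show Real.sqrt 6 ^ 2 = 6 from by rw [sq]; exact h6]
    ring
  · intro φ
    rw [hlam]
    show κ*φ/Real.sqrt 6 = -(Real.sqrt 6 / κ) * (c - a*φ) / (6*a/κ^2) + κ*c/(Real.sqrt 6 * a)
    have hα : (6:ℝ)*a/κ^2 ≠ 0 := by positivity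
    field_simp
    ring_nf
    rw [show Real.sqrt 6 ^ 2 = 6 from by rw [sq]; exact h6]
    ring
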